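/- Under the stated hypotheses, sup_{k∈ℤ} ‖k·(S_{k+1} − S_k)‖ < ∞, i.e. there exists a constant M > 0 such that ‖k·((i(k+1))^{n}·N_{k+1} − (ik)^{n}·N_k)‖ ≤ M for all integers k. -/

import Mathlib

open Finset

/-- The operator `D_k := (Σ_{j=1}^{n} (ik)^{j})·I − A − L_k`. -/
noncomputable def Dop {X : Type*} [NormedAddCommGroup X] [NormedSpace ℂ X]
    (n : ℕ) (A : X →L[ℂ] X) (L : ℤ → X →L[ℂ] X) (k : ℤ) : X →L[ℂ] X :=
  (∑ j ∈ Finset.Icc 1 n, (Complex.I * (k : ℂ)) ^ (j : ℕ)) • (1 : X →L[ℂ] X) - A - L k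

lemma pow_sub_pow_norm_le (z w : ℂ) (t : ℝ) (hz : ‖z‖ ≤ t) (hw : ‖w‖ ≤ t) (m : ℕ) :
    ‖z ^ m - w ^ m‖ ≤ m * t ^ (m - 1) * ‖z - w‖ := by
  have ht : (0:ℝ) ≤ t := le_trans (norm_nonneg z) hz
  rw [← geom_sum₂_mul z w m]
  calc ‖(∑ i ∈ range m, z ^ i * w ^ (m - 1 - i)) * (z - w)‖
      ≤ ‖∑ i ∈ range m, z ^ i * w ^ (m - 1 - i)‖ * ‖z - w‖ := norm_mul_le _ _
    _ ≤ (m * t ^ (m - 1)) * ‖z - w‖ := by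
        gcongr
        calc ‖∑ i ∈ range m, z ^ i * w ^ (m - 1 - i)‖
            ≤ ∑ i ∈ range m, ‖z ^ i * w ^ (m - 1 - i)‖ := norm_sum_le _ _
          _ ≤ ∑ i ∈ range m, t ^ (m - 1) := by
              refine Finset.sum_le_sum fun i hi => ?_
              have hi' : i < m := mem_range.mp hi
              have h2 : ‖z ^ i * w ^ (m - 1 - i)‖ ≤ t ^ i * t ^ (m - 1 - i) := by
                rw [norm_mul, norm_pow, norm_pow]
                gcongr
              refine h2.trans ?_
              rw [← pow_add]
              have h3 : i + (m - 1 - i) = m - 1 := by omega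
              rw [h3]
          _ = m * t ^ (m - 1) := by rw [Finset.sum_const, card_range, nsmul_eq_mul]

lemma key_identity {X : Type*} [NormedAddCommGroup X] [NormedSpace ℂ X]
    (n : ℕ) (A : X →L[ℂ] X) (L N : ℤ → X →L[ℂ] X)
    (hN : ∀ k : ℤ, N k * Dop n A L k = 1 ∧ Dop n A L k * N k = 1) (k : ℤ) :
    (k : ℂ) • (((Complex.I * ((k : ℂ) + 1)) ^ n) • N (k + 1)
        - ((Complex.I * (k : ℂ)) ^ n) • N k)
    = ((k : ℂ) * ((Complex.I * ((k : ℂ) + 1)) ^ n - (Complex.I * (k : ℂ)) ^ n)) • N (k + 1)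
      + ((k : ℂ) * (Complex.I * (k : ℂ)) ^ n *
          ((∑ j ∈ Finset.Icc 1 n, (Complex.I * (k : ℂ)) ^ j)
            - ∑ j ∈ Finset.Icc 1 n, (Complex.I * ((k : ℂ) + 1)) ^ j)) • (N (k + 1) * N k)
      + N (k + 1) * ((k : ℂ) • (L (k + 1) - L k)) * (((Complex.I * (k : ℂ)) ^ n) • N k) := by
  set a : ℂ := Complex.I * (k : ℂ)
  set b : ℂ := Complex.I * ((k : ℂ) + 1)
  set Pa : ℂ := ∑ j ∈ Finset.Icc 1 n, a ^ j
  set Pb : ℂ := ∑ j ∈ Finset.Icc 1 n, b ^ j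
  have hcast : ((k + 1 : ℤ) : ℂ) = (k : ℂ) + 1 := by push_cast; ring
  have hD : Dop n A L k - Dop n A L (k + 1) = (Pa - Pb) • (1 : X →L[ℂ] X) + (L (k + 1) - L k) := by
    simp only [Dop, hcast]
    module
  have hres : N (k + 1) - N k = N (k + 1) * (Dop n A L k - Dop n A L (k + 1)) * N k := by
    have h1 := (hN k).2
    have h2 := (hN (k + 1)).1
    calc N (k + 1) - N k
        = N (k + 1) * (Dop n A L k * N k) - (N (k + 1) * Dop n A L (k + 1)) * N k := by
          rw [h1, h2, mul_one, one_mul]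
      _ = N (k + 1) * (Dop n A L k - Dop n A L (k + 1)) * N k := by noncomm_ring
  have h1 : N (k + 1) - N k
      = (Pa - Pb) • (N (k + 1) * N k) + N (k + 1) * (L (k + 1) - L k) * N k := by
    rw [hres, hD]
    simp only [mul_add, add_mul, mul_smul_comm, smul_mul_assoc, mul_one]
  have h3 : N (k + 1) * ((k : ℂ) • (L (k + 1) - L k)) * (a ^ n • N k)
      = ((k : ℂ) * a ^ n) • (N (k + 1) * (L (k + 1) - L k) * N k) := by
    simp only [mul_smul_comm, smul_mul_assoc, smul_smul]; module
  rw [h3]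
  calc (k : ℂ) • (b ^ n • N (k + 1) - a ^ n • N k)
      = ((k : ℂ) * (b ^ n - a ^ n)) • N (k + 1) + ((k : ℂ) * a ^ n) • (N (k + 1) - N k) := by
        module
    _ = _ := by rw [h1]; module

/-- `sup_{k∈ℤ} ‖k·(S_{k+1} − S_k)‖ < ∞` where `S_k = (ik)^n·N_k`. -/
theorem S_diff_bounded {X : Type*} [NormedAddCommGroup X] [NormedSpace ℂ X] [CompleteSpace X]
    (n : ℕ) (hn : 1 ≤ n) (A : X →L[ℂ] X) (L N : ℤ → X →L[ℂ] X)
    (hL : ∃ C : ℝ, ∀ k : ℤ, ‖L k‖ ≤ C)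
    (hLdiff : ∃ C : ℝ, ∀ k : ℤ, ‖(k : ℂ) • (L (k + 1) - L k)‖ ≤ C)
    (hN : ∀ k : ℤ, N k * Dop n A L k = 1 ∧ Dop n A L k * N k = 1)
    (hNbdd : ∃ C : ℝ, ∀ k : ℤ, ‖N k‖ ≤ C)
    (hSbdd : ∃ C : ℝ, ∀ k : ℤ, ‖((Complex.I * (k : ℂ)) ^ (n : ℕ)) • N k‖ ≤ C) :
    ∃ M > (0 : ℝ), ∀ k : ℤ,
      ‖(k : ℂ) • (((Complex.I * ((k : ℂ) + 1)) ^ (n : ℕ)) • N (k + 1)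
          - ((Complex.I * (k : ℂ)) ^ (n : ℕ)) • N k)‖ ≤ M := by
  obtain ⟨CL, hCL⟩ := hLdiff
  obtain ⟨CN, hCN⟩ := hNbdd
  obtain ⟨CS, hCS⟩ := hSbdd
  have hCN0 : 0 ≤ CN := (norm_nonneg _).trans (hCN 0)
  have hCL0 : 0 ≤ CL := (norm_nonneg _).trans (hCL 0)
  have hCS0 : 0 ≤ CS := (norm_nonneg _).trans (hCS 0)
  set K : ℝ := (n : ℝ) ^ 2 * 2 ^ n with hK
  have hK0 : 0 ≤ K := by positivity
  have hM0 : (0:ℝ) ≤ K * CS := mul_nonneg hK0 hCS0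
  have hM1 : (0:ℝ) ≤ K * (CS * CS) := mul_nonneg hK0 (mul_nonneg hCS0 hCS0)
  have hM2 : (0:ℝ) ≤ CN * CL * CS := mul_nonneg (mul_nonneg hCN0 hCL0) hCS0
  refine ⟨CN + K * CS + K * (CS * CS) + CN * CL * CS + 1, by positivity, fun k => ?_⟩
  rcases eq_or_ne k 0 with rfl | hk0
  · simp only [Int.cast_zero, zero_smul, norm_zero]
    positivity
  rcases eq_or_ne k (-1) with rfl | hk1
  · have e1 : (Complex.I * (((-1 : ℤ) : ℂ) + 1)) ^ n = 0 := by
      have h0 : ((-1 : ℤ) : ℂ) + 1 = 0 := by push_cast; ring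
      rw [h0, mul_zero, zero_pow (by omega)]
    rw [e1, zero_smul, zero_sub, smul_neg, norm_neg, smul_smul,
      norm_smul (((-1 : ℤ) : ℂ) * (Complex.I * ((-1 : ℤ) : ℂ)) ^ n) (N (-1))]
    have e2 : ‖((-1 : ℤ) : ℂ) * (Complex.I * ((-1 : ℤ) : ℂ)) ^ n‖ = 1 := by
      rw [norm_mul, norm_pow, norm_mul, Complex.norm_I]
      push_cast
      simp
    rw [e2, one_mul]
    linarith [hCN (-1 : ℤ)]
  -- general case : k ≠ 0, k ≠ -1
  set a : ℂ := Complex.I * (k : ℂ) with ha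
  set b : ℂ := Complex.I * ((k : ℂ) + 1) with hb
  rw [key_identity n A L N hN k]
  set Pd : ℂ := (∑ j ∈ Finset.Icc 1 n, a ^ j) - ∑ j ∈ Finset.Icc 1 n, b ^ j with hPd
  have hnk : ‖(k : ℂ)‖ = |(k : ℝ)| := by
    rw [show ((k : ℤ) : ℂ) = ((k : ℝ) : ℂ) by push_cast; ring, Complex.norm_real]
    rfl
  have h1k : (1 : ℝ) ≤ ‖(k : ℂ)‖ := by
    rw [hnk]
    exact_mod_cast Int.one_le_abs hk0
  have h1k1 : (1 : ℝ) ≤ ‖(k : ℂ) + 1‖ := by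
    have hcast : (k : ℂ) + 1 = (((k + 1 : ℤ) : ℝ) : ℂ) := by push_cast; ring
    rw [hcast, Complex.norm_real]
    have h4 : (1 : ℝ) ≤ |((k + 1 : ℤ) : ℝ)| := by
      exact_mod_cast Int.one_le_abs (by omega)
    exact h4
  have hna : ‖a‖ = ‖(k : ℂ)‖ := by rw [ha, norm_mul, Complex.norm_I, one_mul]
  have hnb : ‖b‖ = ‖(k : ℂ) + 1‖ := by rw [hb, norm_mul, Complex.norm_I, one_mul]
  set t : ℝ := 2 * ‖b‖ with htdef
  have ht1 : (1 : ℝ) ≤ t := by rw [htdef, hnb]; linarith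
  have ht0 : (0 : ℝ) ≤ t := by linarith
  have hka : ‖(k : ℂ)‖ ≤ t := by
    have h2 : ‖(k : ℂ)‖ ≤ ‖(k : ℂ) + 1‖ + 1 := by
      calc ‖(k : ℂ)‖ = ‖((k : ℂ) + 1) - 1‖ := by ring_nf
        _ ≤ ‖(k : ℂ) + 1‖ + ‖(1 : ℂ)‖ := norm_sub_le _ _
        _ = ‖(k : ℂ) + 1‖ + 1 := by rw [norm_one]
    rw [htdef, hnb]; linarith
  have hat : ‖a‖ ≤ t := by rw [hna]; exact hka
  have hbt : ‖b‖ ≤ t := by rw [htdef]; linarith [norm_nonneg b]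
  have hba : b - a = Complex.I := by rw [ha, hb]; ring
  have hab : a - b = -Complex.I := by rw [ha, hb]; ring
  have htn : t ^ n = 2 ^ n * ‖b‖ ^ n := by rw [htdef, mul_pow]
  have htpow : t * t ^ (n - 1) = t ^ n := by
    rw [show t ^ n = t ^ (n - 1) * t by rw [← pow_succ]; congr 1; omega]; ring
  -- Bound 1
  have hB1 : ‖(k : ℂ) * (b ^ n - a ^ n)‖ ≤ (n : ℝ) * 2 ^ n * ‖b ^ n‖ := by
    calc ‖(k : ℂ) * (b ^ n - a ^ n)‖ = ‖(k : ℂ)‖ * ‖b ^ n - a ^ n‖ := norm_mul _ _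
      _ ≤ t * ((n : ℝ) * t ^ (n - 1) * ‖b - a‖) := by
          have h5 := pow_sub_pow_norm_le b a t hbt hat n
          exact mul_le_mul hka h5 (norm_nonneg _) ht0
      _ = t * ((n : ℝ) * t ^ (n - 1)) := by rw [hba, Complex.norm_I, mul_one]
      _ = (n : ℝ) * (t * t ^ (n - 1)) := by ring
      _ = (n : ℝ) * 2 ^ n * ‖b‖ ^ n := by rw [htpow, htn]; ring
      _ = (n : ℝ) * 2 ^ n * ‖b ^ n‖ := by rw [← norm_pow]
  -- Bound 2
  have hB2 : ‖Pd‖ ≤ (n : ℝ) ^ 2 * t ^ (n - 1) := by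
    rw [hPd, ← Finset.sum_sub_distrib]
    calc ‖∑ j ∈ Finset.Icc 1 n, (a ^ j - b ^ j)‖
        ≤ ∑ j ∈ Finset.Icc 1 n, ‖a ^ j - b ^ j‖ := norm_sum_le _ _
      _ ≤ ∑ j ∈ Finset.Icc 1 n, (n : ℝ) * t ^ (n - 1) := by
          refine Finset.sum_le_sum fun j hj => ?_
          obtain ⟨hj1, hj2⟩ := Finset.mem_Icc.mp hj
          calc ‖a ^ j - b ^ j‖ ≤ (j : ℝ) * t ^ (j - 1) * ‖a - b‖ :=
                pow_sub_pow_norm_le a b t hat hbt j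
            _ = (j : ℝ) * t ^ (j - 1) := by rw [hab, norm_neg, Complex.norm_I, mul_one]
            _ ≤ (n : ℝ) * t ^ (n - 1) := by
                have hjn : (j : ℝ) ≤ (n : ℝ) := by exact_mod_cast hj2
                have hp : t ^ (j - 1) ≤ t ^ (n - 1) := pow_le_pow_right₀ ht1 (by omega)
                exact mul_le_mul hjn hp (by positivity) (by positivity)
      _ = (n : ℝ) * ((n : ℝ) * t ^ (n - 1)) := by
          rw [Finset.sum_const, Nat.card_Icc, nsmul_eq_mul]
          norm_num
      _ = (n : ℝ) ^ 2 * t ^ (n - 1) := by ring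
  have hB2' : ‖(k : ℂ) * a ^ n * Pd‖ ≤ K * ‖b ^ n‖ * ‖a ^ n‖ := by
    rw [norm_mul, norm_mul]
    calc ‖(k : ℂ)‖ * ‖a ^ n‖ * ‖Pd‖
        ≤ t * ‖a ^ n‖ * ((n : ℝ) ^ 2 * t ^ (n - 1)) := by
          exact mul_le_mul (mul_le_mul_of_nonneg_right hka (norm_nonneg _)) hB2
            (norm_nonneg _) (by positivity)
      _ = (n : ℝ) ^ 2 * (t * t ^ (n - 1)) * ‖a ^ n‖ := by ring
      _ = K * ‖b‖ ^ n * ‖a ^ n‖ := by rw [htpow, htn, hK]; ring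
      _ = K * ‖b ^ n‖ * ‖a ^ n‖ := by rw [← norm_pow]
  -- term bounds
  have hCS1 : ‖b ^ n • N (k + 1)‖ ≤ CS := by
    have h := hCS (k + 1)
    have hc : ((k + 1 : ℤ) : ℂ) = (k : ℂ) + 1 := by push_cast; ring
    rwa [hc] at h
  have hCSk : ‖a ^ n • N k‖ ≤ CS := hCS k
  have T1 : ‖((k : ℂ) * (b ^ n - a ^ n)) • N (k + 1)‖ ≤ K * CS := by
    rw [norm_smul ((k : ℂ) * (b ^ n - a ^ n)) (N (k + 1))]
    calc ‖(k : ℂ) * (b ^ n - a ^ n)‖ * ‖N (k + 1)‖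
        ≤ ((n : ℝ) * 2 ^ n * ‖b ^ n‖) * ‖N (k + 1)‖ :=
          mul_le_mul_of_nonneg_right hB1 (norm_nonneg _)
      _ = (n : ℝ) * 2 ^ n * ‖b ^ n • N (k + 1)‖ := by
          rw [norm_smul (b ^ n) (N (k + 1))]; ring
      _ ≤ (n : ℝ) * 2 ^ n * CS := by gcongr
      _ ≤ K * CS := by
          rw [hK]
          have hn1 : (1 : ℝ) ≤ (n : ℝ) := by exact_mod_cast hn
          have hnn : (n:ℝ) * 2 ^ n ≤ (n:ℝ) ^ 2 * 2 ^ n := by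
            have h6 : (n:ℝ) ≤ (n:ℝ) ^ 2 := by nlinarith
            exact mul_le_mul_of_nonneg_right h6 (by positivity)
          exact mul_le_mul_of_nonneg_right hnn hCS0
  have T2 : ‖((k : ℂ) * a ^ n * Pd) • (N (k + 1) * N k)‖ ≤ K * (CS * CS) := by
    rw [norm_smul ((k : ℂ) * a ^ n * Pd) (N (k + 1) * N k)]
    calc ‖(k : ℂ) * a ^ n * Pd‖ * ‖N (k + 1) * N k‖
        ≤ (K * ‖b ^ n‖ * ‖a ^ n‖) * (‖N (k + 1)‖ * ‖N k‖) :=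
          mul_le_mul hB2' (norm_mul_le _ _) (norm_nonneg _) (by positivity)
      _ = (‖b ^ n‖ * ‖N (k + 1)‖) * (‖a ^ n‖ * ‖N k‖) * K := by ring
      _ = ‖b ^ n • N (k + 1)‖ * ‖a ^ n • N k‖ * K := by
          rw [norm_smul (b ^ n) (N (k + 1)), norm_smul (a ^ n) (N k)]
      _ ≤ CS * CS * K :=
          mul_le_mul_of_nonneg_right
            (mul_le_mul hCS1 hCSk (norm_nonneg _) hCS0) hK0
      _ = K * (CS * CS) := by ring
  have T3 : ‖N (k + 1) * ((k : ℂ) • (L (k + 1) - L k)) * (a ^ n • N k)‖ ≤ CN * CL * CS := by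
    calc ‖N (k + 1) * ((k : ℂ) • (L (k + 1) - L k)) * (a ^ n • N k)‖
        ≤ ‖N (k + 1) * ((k : ℂ) • (L (k + 1) - L k))‖ * ‖a ^ n • N k‖ := norm_mul_le _ _
      _ ≤ (‖N (k + 1)‖ * ‖(k : ℂ) • (L (k + 1) - L k)‖) * ‖a ^ n • N k‖ :=
          mul_le_mul_of_nonneg_right (norm_mul_le _ _) (norm_nonneg _)
      _ ≤ (CN * CL) * CS := by
          refine mul_le_mul ?_ hCSk (norm_nonneg _) (by positivity)
          exact mul_le_mul (hCN _) (hCL k) (norm_nonneg _) hCN0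
      _ = CN * CL * CS := by ring
  refine le_trans (norm_add_le _ _) ?_
  refine le_trans (add_le_add_left (norm_add_le _ _) _) ?_
  linarith [T1, T2, T3]
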